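/- Let F : 𝔽₂ⁿ → 𝔽₂ⁿ be an APN plateaued function all of whose component functions are unbalanced. Then for all a, α, b ∈ 𝔽₂ⁿ with b ≠ F(a), one has ∑_{(u,v) : u·(a+α) ≠ v·(F(a)+F(α))} (−1)^{u·a + v·b} · W_F(u,v)³ = 0, the sum ranging over pairs (u, v) ∈ 𝔽₂ⁿ × 𝔽₂ⁿ with u·(a+α) ≠ v·(F(a)+F(α)). -/
import Mathlib


/-- The vector space `𝔽₂ⁿ`. -/
abbrev V (n : ℕ) := Fin n → ZMod 2

/-- The standard inner product on `𝔽₂ⁿ`, valued in `𝔽₂`. -/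
def ip {n : ℕ} (x y : V n) : ZMod 2 := ∑ i, x i * y i

/-- `F` is almost perfect nonlinear: for `a ≠ 0`, `F (x + a) + F x = b` has at most 2
solutions. -/
def IsAPN {G : Type*} [AddCommGroup G] [Fintype G] [DecidableEq G] (F : G → G) : Prop :=
  ∀ a b : G, a ≠ 0 → (Finset.univ.filter (fun x => F (x + a) + F x = b)).card ≤ 2

/-- The Walsh transform `W_F(u, v) = ∑_x (−1)^(v·F(x) + u·x)`. -/
def walsh {n : ℕ} (F : V n → V n) (u v : V n) : ℤ :=
  ∑ x : V n, (-1 : ℤ) ^ (ip v (F x) + ip u x).val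

/-- The graph `G_F = {(x, F(x)) : x ∈ 𝔽₂ⁿ}` of `F`, as a finite set. -/
def graphF {n : ℕ} (F : V n → V n) : Finset (V n × V n) :=
  Finset.univ.image (fun x => (x, F x))

/-- The exclude multiplicity of `y` w.r.t. `S`: the number of 3-element subsets of `S`
whose elements sum to `y`. -/
def excMult {G : Type*} [AddCommGroup G] [DecidableEq G] (S : Finset G) (y : G) : ℕ :=
  ((S.powersetCard 3).filter (fun T => T.sum id = y)).card


/-! ### Auxiliary lemmas -/

/-- The sign character of `𝔽₂`. -/
def chi (s : ZMod 2) : ℤ := (-1) ^ s.val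

lemma chi_add (s t : ZMod 2) : chi (s + t) = chi s * chi t := by revert s t; decide

lemma chi_mul_self : ∀ s : ZMod 2, chi s * chi s = 1 := by decide

lemma ip_add_left {n : ℕ} (x y z : V n) : ip (x + y) z = ip x z + ip y z := by
  simp [ip, add_mul, Finset.sum_add_distrib]

lemma ip_add_right {n : ℕ} (x y z : V n) : ip x (y + z) = ip x y + ip x z := by
  simp [ip, mul_add, Finset.sum_add_distrib]

lemma V_add_self {n : ℕ} (x : V n) : x + x = 0 := by
  funext i
  have h : ∀ s : ZMod 2, s + s = 0 := by decide
  simpa using h (x i)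

lemma sum_chi_ip {n : ℕ} (c : V n) :
    ∑ u : V n, chi (ip u c) = if c = 0 then (2 : ℤ) ^ n else 0 := by
  split_ifs with h
  · subst h
    simp [ip, chi, Finset.card_univ]
  · obtain ⟨i, hi⟩ : ∃ i, c i ≠ 0 := by
      by_contra hall; push_neg at hall; exact h (funext hall)
    have hci : c i = 1 := by
      have h1 : ∀ s : ZMod 2, s ≠ 0 → s = 1 := by decide
      exact h1 _ hi
    set δ : V n := Pi.single i 1 with hδ
    have hipδ : ip δ c = 1 := by
      simp [ip, hδ, Pi.single_apply, Finset.sum_ite_eq', hci]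
    have key : ∑ u : V n, chi (ip u c) = ∑ u : V n, chi (ip (u + δ) c) :=
      Fintype.sum_equiv (Equiv.addRight δ) _ _ (fun u => by
        show chi (ip u c) = chi (ip (u + δ + δ) c)
        rw [add_assoc, V_add_self, add_zero])
    have key2 : ∀ u : V n, chi (ip (u + δ) c) = - chi (ip u c) := by
      intro u
      rw [ip_add_left, chi_add, hipδ]
      have h1 : chi 1 = -1 := by decide
      rw [h1]; ring
    simp only [key2, Finset.sum_neg_distrib] at key
    linarith

lemma sum_chi_mul_walsh {n : ℕ} (F : V n → V n) (v a : V n) :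
    ∑ u : V n, chi (ip u a) * walsh F u v = 2 ^ n * chi (ip v (F a)) := by
  have hw : ∀ u, walsh F u v = ∑ x : V n, chi (ip v (F x) + ip u x) := fun u => rfl
  calc ∑ u : V n, chi (ip u a) * walsh F u v
      = ∑ u : V n, ∑ x : V n, chi (ip v (F x)) * chi (ip u (x + a)) := by
        refine Finset.sum_congr rfl fun u _ => ?_
        rw [hw, Finset.mul_sum]
        refine Finset.sum_congr rfl fun x _ => ?_
        rw [chi_add, ip_add_right, chi_add]; ring
    _ = ∑ x : V n, chi (ip v (F x)) * ∑ u : V n, chi (ip u (x + a)) := by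
        rw [Finset.sum_comm]
        exact Finset.sum_congr rfl fun x _ => (Finset.mul_sum _ _ _).symm
    _ = 2 ^ n * chi (ip v (F a)) := by
        simp only [sum_chi_ip]
        rw [Finset.sum_eq_single a]
        · rw [V_add_self]; simp [mul_comm]
        · intro x _ hx
          have hne : x + a ≠ 0 := by
            intro h0
            apply hx
            have h1 := congrArg (· + a) h0
            simpa [add_assoc, V_add_self] using h1
          simp [hne]
        · simp

lemma full_sum {n : ℕ} (F : V n → V n) (lam : V n → ℤ)
    (hlam : ∀ v u, walsh F u v ^ 3 = lam v ^ 2 * walsh F u v) (a b : V n) :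
    ∑ uv : V n × V n, chi (ip uv.1 a + ip uv.2 b) * walsh F uv.1 uv.2 ^ 3
      = 2 ^ n * ∑ v : V n, lam v ^ 2 * chi (ip v (b + F a)) := by
  rw [Fintype.sum_prod_type, Finset.sum_comm]
  calc ∑ v : V n, ∑ u : V n, chi (ip u a + ip v b) * walsh F u v ^ 3
      = ∑ v : V n, lam v ^ 2 * chi (ip v b) * ∑ u : V n, chi (ip u a) * walsh F u v := by
        refine Finset.sum_congr rfl fun v _ => ?_
        rw [Finset.mul_sum]
        refine Finset.sum_congr rfl fun u _ => ?_
        rw [hlam, chi_add]; ring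
    _ = _ := by
        simp only [sum_chi_mul_walsh]
        rw [Finset.mul_sum]
        refine Finset.sum_congr rfl fun v _ => ?_
        rw [ip_add_right, chi_add]; ring


lemma V_add_self' (s : ZMod 2) : s + s = 0 := by revert s; decide

/-- Let `F : 𝔽₂ⁿ → 𝔽₂ⁿ` be an APN plateaued function all of whose component
functions are unbalanced. Then for all `a, α, b` with `b ≠ F a`,
`∑_{(u,v) : u·(a+α) ≠ v·(F a + F α)} (−1)^(u·a + v·b) W_F(u,v)³ = 0`. -/
theorem plateaued_unbalanced_walsh_cube_sum_zero (n : ℕ) (F : V n → V n) (hF : IsAPN F)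
    (hplateaued : ∀ v : V n, ∃ lam : ℤ, 0 ≤ lam ∧
      ∀ u : V n, walsh F u v = 0 ∨ walsh F u v = lam ∨ walsh F u v = -lam)
    (hunbalanced : ∀ v : V n, v ≠ 0 → walsh F 0 v ≠ 0)
    (a α b : V n) (hb : b ≠ F a) :
    ∑ uv ∈ Finset.univ.filter
        (fun uv : V n × V n => ip uv.1 (a + α) ≠ ip uv.2 (F a + F α)),
        (-1 : ℤ) ^ (ip uv.1 a + ip uv.2 b).val * walsh F uv.1 uv.2 ^ 3 = 0 := by

  choose lam hlam0 hlam using hplateaued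
  have hcube : ∀ v u : V n, walsh F u v ^ 3 = lam v ^ 2 * walsh F u v := by
    intro v u
    rcases hlam v u with h | h | h <;> rw [h] <;> ring
  have key : ∀ uv : V n × V n,
      chi (ip uv.1 α + ip uv.2 (b + F a + F α)) * walsh F uv.1 uv.2 ^ 3
        = chi (ip uv.1 (a + α) + ip uv.2 (F a + F α)) *
          (chi (ip uv.1 a + ip uv.2 b) * walsh F uv.1 uv.2 ^ 3) := by
    rintro ⟨u, v⟩
    simp only [ip_add_left, ip_add_right, chi_add]
    linear_combination (-(chi (ip u α) * chi (ip v b) * chi (ip v (F a)) * chi (ip v (F α)) *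
      walsh F u v ^ 3)) * chi_mul_self (ip u a)
  have hS : ∑ uv : V n × V n, chi (ip uv.1 a + ip uv.2 b) * walsh F uv.1 uv.2 ^ 3
      = ∑ uv : V n × V n,
          chi (ip uv.1 α + ip uv.2 (b + F a + F α)) * walsh F uv.1 uv.2 ^ 3 := by
    rw [full_sum F lam hcube, full_sum F lam hcube]
    have hbb : b + F a + F α + F α = b + F a := by
      rw [add_assoc (b + F a), V_add_self, add_zero]
    rw [hbb]
  have h1 := Finset.sum_filter_add_sum_filter_not (Finset.univ : Finset (V n × V n))
      (fun uv : V n × V n => ip uv.1 (a + α) ≠ ip uv.2 (F a + F α))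
      (fun uv : V n × V n => chi (ip uv.1 a + ip uv.2 b) * walsh F uv.1 uv.2 ^ 3)
  have h2 := Finset.sum_filter_add_sum_filter_not (Finset.univ : Finset (V n × V n))
      (fun uv : V n × V n => ip uv.1 (a + α) ≠ ip uv.2 (F a + F α))
      (fun uv : V n × V n =>
        chi (ip uv.1 α + ip uv.2 (b + F a + F α)) * walsh F uv.1 uv.2 ^ 3)
  have hT : ∑ uv ∈ Finset.univ.filter
        (fun uv : V n × V n => ip uv.1 (a + α) ≠ ip uv.2 (F a + F α)),
        chi (ip uv.1 α + ip uv.2 (b + F a + F α)) * walsh F uv.1 uv.2 ^ 3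
      = - ∑ uv ∈ Finset.univ.filter
        (fun uv : V n × V n => ip uv.1 (a + α) ≠ ip uv.2 (F a + F α)),
        chi (ip uv.1 a + ip uv.2 b) * walsh F uv.1 uv.2 ^ 3 := by
    rw [← Finset.sum_neg_distrib]
    refine Finset.sum_congr rfl fun uv huv => ?_
    have hp := (Finset.mem_filter.mp huv).2
    have hone : ip uv.1 (a + α) + ip uv.2 (F a + F α) = 1 := by
      have hd : ∀ s t : ZMod 2, s ≠ t → s + t = 1 := by decide
      exact hd _ _ hp
    have hchi : chi (ip uv.1 (a + α) + ip uv.2 (F a + F α)) = -1 := by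
      rw [hone]; decide
    rw [key uv, hchi]; ring
  have hN : ∑ uv ∈ Finset.univ.filter
        (fun uv : V n × V n => ¬ ip uv.1 (a + α) ≠ ip uv.2 (F a + F α)),
        chi (ip uv.1 α + ip uv.2 (b + F a + F α)) * walsh F uv.1 uv.2 ^ 3
      = ∑ uv ∈ Finset.univ.filter
        (fun uv : V n × V n => ¬ ip uv.1 (a + α) ≠ ip uv.2 (F a + F α)),
        chi (ip uv.1 a + ip uv.2 b) * walsh F uv.1 uv.2 ^ 3 := by
    refine Finset.sum_congr rfl fun uv huv => ?_
    have hp := (Finset.mem_filter.mp huv).2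
    rw [not_not] at hp
    have hzero : ip uv.1 (a + α) + ip uv.2 (F a + F α) = 0 := by
      rw [hp]; exact V_add_self' _
    have hchi : chi (ip uv.1 (a + α) + ip uv.2 (F a + F α)) = 1 := by
      rw [hzero]; decide
    rw [key uv, hchi]; ring
  show ∑ uv ∈ Finset.univ.filter
        (fun uv : V n × V n => ip uv.1 (a + α) ≠ ip uv.2 (F a + F α)),
        chi (ip uv.1 a + ip uv.2 b) * walsh F uv.1 uv.2 ^ 3 = 0
  linarith
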